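/- Let c, A ∈ ℝ and let φ : ℝ → ℝ be twice continuously differentiable with (φ(x) − φ''(x))·((φ'(x))² − φ(x)² + c) = A for all x ∈ ℝ. Then the function x ↦ (φ(x)² − (φ'(x))² − c)² + 4·A·φ(x) is constant on ℝ. -/

import Mathlib

/-- the traveling-wave ODE `(φ − φ'')((φ')² − φ² + c) = A` has the
first integral `(φ² − (φ')² − c)² + 4Aφ`, i.e. this function is constant. -/
theorem first_integral (c A : ℝ) (φ : ℝ → ℝ)
    (hφ : ContDiff ℝ 2 φ)
    (hODE : ∀ x, (φ x - deriv (deriv φ) x) * ((deriv φ x) ^ 2 - (φ x) ^ 2 + c) = A) :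
    ∀ x y,
      ((φ x) ^ 2 - (deriv φ x) ^ 2 - c) ^ 2 + 4 * A * φ x
        = ((φ y) ^ 2 - (deriv φ y) ^ 2 - c) ^ 2 + 4 * A * φ y := by
  have h1 : Differentiable ℝ φ := hφ.differentiable (by norm_num)
  have h2 : Differentiable ℝ (deriv φ) := by
    have : ContDiff ℝ (1 + 1) φ := by norm_num at hφ ⊢; exact hφ
    exact ((contDiff_succ_iff_deriv.mp this).2.2).differentiable one_ne_zero
  have hd : ∀ x, HasDerivAt
      (fun x => ((φ x) ^ 2 - (deriv φ x) ^ 2 - c) ^ 2 + 4 * A * φ x) 0 x := by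
    intro x
    have hφx : HasDerivAt φ (deriv φ x) x := (h1 x).hasDerivAt
    have hφ'x : HasDerivAt (deriv φ) (deriv (deriv φ) x) x := (h2 x).hasDerivAt
    have H := ((((hφx.pow 2).sub (hφ'x.pow 2)).sub_const c).pow 2).add
      (hφx.const_mul (4 * A))
    convert H using 1
    · rfl
    · rfl
    · rfl
    push_cast
    simp only [Pi.sub_apply, Pi.pow_apply]
    linear_combination (4 * deriv φ x) * hODE x
  intro x y
  exact is_const_of_deriv_eq_zero (fun z => (hd z).differentiableAt)
    (fun z => (hd z).deriv) x y
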